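/- Let φ₀ : ℝ → ℝ be differentiable on ℝ with φ₀' differentiable at x₀, and assume φ₀''(x₀) < 0. Let r > 0, let f₀ = exp ∘ φ₀, and define φ_r(y) = exp(−φ₀(y)/r). Then (r·f₀(x₀)³·|φ_r''(x₀)| / (φ_r(x₀)·24))^{1/5} ≥ (f₀(x₀)³·|φ₀''(x₀)| / 24)^{1/5}, with strict inequality whenever φ₀'(x₀) ≠ 0. Indeed, the left-hand side equals (f₀(x₀)³·φ₀'(x₀)²/(24·r) + f₀(x₀)³·|φ₀''(x₀)|/24)^{1/5}. -/

import Mathlib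

/-- Comparison of the s-concave and log-concave constants `d^{(0)}_{2,sc}` and
`d^{(0)}_{2,lc}` for the density value: the s-concave constant is at least the
log-concave one, strictly whenever `φ₀'(x₀) ≠ 0`, with the explicit expression for the
s-concave constant. -/
theorem sc_ge_lc_constant_value
    (φ₀ : ℝ → ℝ) (x₀ r : ℝ) (hr : 0 < r)
    (hd : Differentiable ℝ φ₀) (hd2 : DifferentiableAt ℝ (deriv φ₀) x₀)
    (hneg : deriv (deriv φ₀) x₀ < 0)
    (f₀ φr : ℝ → ℝ)
    (hf₀ : f₀ = fun y => Real.exp (φ₀ y))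
    (hφr : φr = fun y => Real.exp (-φ₀ y / r)) :
    (f₀ x₀ ^ 3 * |deriv (deriv φ₀) x₀| / 24) ^ ((1 : ℝ) / 5) ≤
        (r * f₀ x₀ ^ 3 * |deriv (deriv φr) x₀| / (φr x₀ * 24)) ^ ((1 : ℝ) / 5) ∧
      (deriv φ₀ x₀ ≠ 0 →
        (f₀ x₀ ^ 3 * |deriv (deriv φ₀) x₀| / 24) ^ ((1 : ℝ) / 5) <
          (r * f₀ x₀ ^ 3 * |deriv (deriv φr) x₀| / (φr x₀ * 24)) ^ ((1 : ℝ) / 5)) ∧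
      (r * f₀ x₀ ^ 3 * |deriv (deriv φr) x₀| / (φr x₀ * 24)) ^ ((1 : ℝ) / 5) =
        (f₀ x₀ ^ 3 * (deriv φ₀ x₀) ^ 2 / (24 * r) +
          f₀ x₀ ^ 3 * |deriv (deriv φ₀) x₀| / 24) ^ ((1 : ℝ) / 5) := by
  -- first derivative of φr
  have h1 : deriv φr = fun y => Real.exp (-φ₀ y / r) * (-deriv φ₀ y / r) := by
    funext y
    rw [hφr]
    have hdy : DifferentiableAt ℝ (fun y => -φ₀ y / r) y :=
      ((hd y).neg.div_const r)
    rw [deriv_exp hdy]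
    congr 1
    rw [deriv_div_const, deriv.fun_neg]
  -- second derivative at x₀
  have h2 : deriv (deriv φr) x₀ =
      Real.exp (-φ₀ x₀ / r) * ((deriv φ₀ x₀ / r) ^ 2 - deriv (deriv φ₀) x₀ / r) := by
    rw [h1]
    have hA : DifferentiableAt ℝ (fun y => Real.exp (-φ₀ y / r)) x₀ :=
      (((hd x₀).neg.div_const r)).exp
    have hB : DifferentiableAt ℝ (fun y => -deriv φ₀ y / r) x₀ :=
      (hd2.neg.div_const r)
    rw [deriv_fun_mul hA hB]
    have hdA : deriv (fun y => Real.exp (-φ₀ y / r)) x₀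
        = Real.exp (-φ₀ x₀ / r) * (-deriv φ₀ x₀ / r) := by
      rw [deriv_exp (show DifferentiableAt ℝ (fun y => -φ₀ y / r) x₀ from (hd x₀).neg.div_const r)]
      congr 1
      rw [deriv_div_const, deriv.fun_neg]
    have hdB : deriv (fun y => -deriv φ₀ y / r) x₀ = -deriv (deriv φ₀) x₀ / r := by
      rw [deriv_div_const, deriv.fun_neg]
    rw [hdA, hdB]
    ring
  have hφrpos : 0 < φr x₀ := by rw [hφr]; exact Real.exp_pos _
  have hφrx : φr x₀ = Real.exp (-φ₀ x₀ / r) := by rw [hφr]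
  have hinner : 0 < (deriv φ₀ x₀ / r) ^ 2 - deriv (deriv φ₀) x₀ / r := by
    have h3 : 0 < -(deriv (deriv φ₀) x₀ / r) := by
      rw [← neg_div]; exact div_pos (by linarith) hr
    linarith [sq_nonneg (deriv φ₀ x₀ / r)]
  have habs2 : |deriv (deriv φr) x₀| =
      Real.exp (-φ₀ x₀ / r) * ((deriv φ₀ x₀ / r) ^ 2 - deriv (deriv φ₀) x₀ / r) := by
    rw [h2, abs_of_pos (mul_pos (Real.exp_pos _) hinner)]
  have habs0 : |deriv (deriv φ₀) x₀| = -deriv (deriv φ₀) x₀ := abs_of_neg hneg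
  have hf₀pos : 0 < f₀ x₀ := by rw [hf₀]; exact Real.exp_pos _
  -- key algebraic identity on the bases
  have hkey : r * f₀ x₀ ^ 3 * |deriv (deriv φr) x₀| / (φr x₀ * 24) =
      f₀ x₀ ^ 3 * (deriv φ₀ x₀) ^ 2 / (24 * r) +
        f₀ x₀ ^ 3 * |deriv (deriv φ₀) x₀| / 24 := by
    rw [habs2, habs0, ← hφrx]
    field_simp
    ring
  have hbase0 : 0 ≤ f₀ x₀ ^ 3 * |deriv (deriv φ₀) x₀| / 24 := by positivity
  have hextra : 0 ≤ f₀ x₀ ^ 3 * (deriv φ₀ x₀) ^ 2 / (24 * r) := by positivity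
  refine ⟨?_, ?_, ?_⟩
  · rw [hkey]
    exact Real.rpow_le_rpow hbase0 (by linarith) (by norm_num)
  · intro hne
    rw [hkey]
    have hextra' : 0 < f₀ x₀ ^ 3 * (deriv φ₀ x₀) ^ 2 / (24 * r) := by positivity
    exact Real.rpow_lt_rpow hbase0 (by linarith) (by norm_num)
  · rw [hkey]
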